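/- Proposition 2 (Myopic effect of biased exploration): If δ_b > 0 and for every target state x in the closer set X, P(x_t, a_b, x) ≥ max over x̄ ∈ X of the average (1/|A|)·∑_a P(x_t, a, x̄), then the probability of reaching X in one step under the (ε,δ)-greedy policy is at least that under the ε-greedy policy; i.e., ∑_{x∈X} ∑_a μ_b(a) P(x_t,a,x) ≥ ∑_{x∈X} ∑_a μ_g(a) P(x_t,a,x). -/
import Mathlib


theorem stmt5 {A S : Type*} [Fintype A] [DecidableEq A] [Fintype S] (hcard : 2 ≤ Fintype.card A)
    (astar ab : A) (hne : astar ≠ ab)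
    (P : A → S → ℝ) (X : Finset S) (hX : X.Nonempty)
    (δb δe : ℝ) (hδb : 0 < δb) (hδe : 0 ≤ δe)
    (ε : ℝ) (hε : ε = δb + δe) (hε1 : ε ≤ 1)
    (μg μb : A → ℝ)
    (hμg : ∀ a, μg a = if a = astar then 1 - ε + ε / (Fintype.card A : ℝ)
      else ε / (Fintype.card A : ℝ))
    (hμb : ∀ a, μb a = if a = astar then 1 - ε + δe / (Fintype.card A : ℝ)
      else if a = ab then δb + δe / (Fintype.card A : ℝ)
      else δe / (Fintype.card A : ℝ))
    (hdom : ∀ x ∈ X, ∀ xbar ∈ X,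
      (∑ a : A, P a xbar) / (Fintype.card A : ℝ) ≤ P ab x) :
    ∑ x ∈ X, ∑ a : A, μg a * P a x ≤ ∑ x ∈ X, ∑ a : A, μb a * P a x := by
  have hn : (0:ℝ) < (Fintype.card A : ℝ) := by
    exact_mod_cast lt_of_lt_of_le (by norm_num) hcard
  set n : ℝ := (Fintype.card A : ℝ)
  have hg : ∀ a, μg a = ε / n + (if a = astar then 1 - ε else 0) := by
    intro a; rw [hμg a]; split <;> ring
  have hb : ∀ a, μb a = δe / n + ((if a = astar then 1 - ε else 0)
      + (if a = ab then δb else 0)) := by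
    intro a; rw [hμb a]
    by_cases h1 : a = astar
    · simp [h1, hne, (show astar ≠ ab from hne)]
      ring
    · by_cases h2 : a = ab <;> simp [h1, h2, Ne.symm hne] <;> ring
  apply Finset.sum_le_sum
  intro x hx
  have h := hdom x hx x hx
  have hgsum : ∑ a : A, μg a * P a x = ε / n * ∑ a : A, P a x + (1 - ε) * P astar x := by
    simp only [hg, add_mul, Finset.sum_add_distrib, ite_mul, zero_mul,
      Finset.sum_ite_eq', Finset.mem_univ, if_true, Finset.mul_sum]
  have hbsum : ∑ a : A, μb a * P a x
      = δe / n * ∑ a : A, P a x + ((1 - ε) * P astar x + δb * P ab x) := by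
    simp only [hb, add_mul, Finset.sum_add_distrib, ite_mul, zero_mul,
      Finset.sum_ite_eq', Finset.mem_univ, if_true, Finset.mul_sum]
  rw [hgsum, hbsum]
  have key : δb * ((∑ a : A, P a x) / n) ≤ δb * P ab x :=
    mul_le_mul_of_nonneg_left h hδb.le
  have : ε / n * ∑ a : A, P a x = δe / n * ∑ a : A, P a x + δb * ((∑ a : A, P a x) / n) := by
    field_simp; ring_nf; rw [hε]; ring
  linarith
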